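/- Let A, C, D, q ∈ ℂ with A ≠ 0 and |q| > 1. Then every entire function f : ℂ → ℂ satisfying f'(z) = A·f(qz) + C·f(z) + D for all z ∈ ℂ is a polynomial function; in particular, the equation has no transcendental entire solutions. -/

import Mathlib

/-- For `A ≠ 0` and `|q| > 1`, every entire solution of
`f'(z) = A f(qz) + C f(z) + D` is a polynomial function. -/
theorem stmt10 (A C D q : ℂ) (hA : A ≠ 0) (hq : 1 < ‖q‖)
    (f : ℂ → ℂ) (hf : Differentiable ℂ f)
    (heq : ∀ z : ℂ, deriv f z = A * f (q * z) + C * f z + D) :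
    ∃ p : Polynomial ℂ, ∀ z : ℂ, f z = p.eval z := by
  have hcd : ContDiff ℂ (⊤ : WithTop ℕ∞) f := hf.contDiff
  have hdiff : ∀ n : ℕ, Differentiable ℂ (iteratedDeriv n f) := fun n =>
    hcd.differentiable_iteratedDeriv n (by simp)
  -- Step 1: the functional equation for all iterated derivatives
  have key : ∀ n : ℕ, ∀ z : ℂ,
      deriv (iteratedDeriv n f) z
        = A * q ^ n * iteratedDeriv n f (q * z) + C * iteratedDeriv n f z
          + (if n = 0 then D else 0) := by
    intro n
    induction n with
    | zero => intro z; simpa using heq z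
    | succ n ih =>
      intro z
      have hFn := hdiff n
      have heqn : iteratedDeriv (n + 1) f = fun w =>
          A * q ^ n * iteratedDeriv n f (q * w) + C * iteratedDeriv n f w
            + (if n = 0 then D else 0) := by
        funext w
        rw [iteratedDeriv_succ]
        exact ih w
      have h1 : HasDerivAt (fun w => iteratedDeriv n f (q * w))
          (q * deriv (iteratedDeriv n f) (q * z)) z := by
        have := ((hFn (q * z)).hasDerivAt).comp z ((hasDerivAt_id z).const_mul q)
        simpa [mul_comm, Function.comp_def] using this
      have h2 : HasDerivAt (fun w => A * q ^ n * iteratedDeriv n f (q * w)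
            + C * iteratedDeriv n f w + (if n = 0 then D else 0))
          (A * q ^ n * (q * deriv (iteratedDeriv n f) (q * z))
            + C * deriv (iteratedDeriv n f) z) z :=
        ((h1.const_mul (A * q ^ n)).add ((hFn z).hasDerivAt.const_mul C)).add_const _
      conv_lhs => rw [heqn]
      rw [h2.deriv, iteratedDeriv_succ]
      simp only [if_neg (Nat.succ_ne_zero n)]
      ring
  -- Step 2: the recurrence for the Taylor coefficients at 0
  have key0 : ∀ n : ℕ, n ≠ 0 →
      iteratedDeriv (n + 1) f 0 = (A * q ^ n + C) * iteratedDeriv n f 0 := by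
    intro n hn
    have h := key n 0
    rw [iteratedDeriv_succ]
    rw [h, mul_zero, if_neg hn]
    ring
  set a : ℕ → ℂ := fun n => (n.factorial : ℂ)⁻¹ * iteratedDeriv n f 0 with ha
  have hrec : ∀ n : ℕ, n ≠ 0 → a (n + 1) = (A * q ^ n + C) / (n + 1) * a n := by
    intro n hn
    have h1 : ((n + 1).factorial : ℂ) = (n + 1 : ℂ) * (n.factorial : ℂ) := by
      push_cast [Nat.factorial_succ]; ring
    have hn1 : ((n : ℂ) + 1) ≠ 0 := Nat.cast_add_one_ne_zero n
    have hnf : (n.factorial : ℂ) ≠ 0 := by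
      exact_mod_cast Nat.factorial_ne_zero n
    rw [ha]
    simp only [key0 n hn, h1]
    field_simp
  have hsum := Complex.hasSum_taylorSeries_of_entire hf 0 1
  have htend : Filter.Tendsto a Filter.atTop (nhds 0) := by
    have := hsum.summable.tendsto_atTop_zero
    simpa [ha, smul_eq_mul] using this
  -- Step 3: choose N beyond which the coefficient ratio has modulus at least 1
  have hN : ∃ N : ℕ, 1 ≤ N ∧ ∀ n, N ≤ n →
      ‖C‖ + (n + 1) ≤ ‖A‖ * ‖q‖ ^ n := by
    have hr0 : (0 : ℝ) < (‖q‖)⁻¹ := inv_pos.mpr (by linarith)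
    have hr1 : (‖q‖)⁻¹ < 1 := by
      rw [inv_lt_one_iff₀]; right; exact hq
    have h2 : Filter.Tendsto (fun n : ℕ => (‖C‖ + 1) * ((‖q‖)⁻¹) ^ n
        + (n : ℝ) * ((‖q‖)⁻¹) ^ n) Filter.atTop (nhds 0) := by
      have t1 : Filter.Tendsto (fun n : ℕ => ((‖q‖)⁻¹) ^ n)
          Filter.atTop (nhds 0) :=
        tendsto_pow_atTop_nhds_zero_of_lt_one hr0.le hr1
      have t2 : Filter.Tendsto (fun n : ℕ => (n : ℝ) * ((‖q‖)⁻¹) ^ n)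
          Filter.atTop (nhds 0) := by
        have := (summable_pow_mul_geometric_of_norm_lt_one 1
          (r := (‖q‖)⁻¹) (by rwa [Real.norm_eq_abs, abs_of_pos hr0])).tendsto_atTop_zero
        simpa using this
      simpa using (t1.const_mul (‖C‖ + 1)).add t2
    have hApos : (0 : ℝ) < ‖A‖ := by
      simpa [norm_pos_iff] using hA
    have h3 : ∀ᶠ n : ℕ in Filter.atTop,
        (‖C‖ + 1) * ((‖q‖)⁻¹) ^ n
          + (n : ℝ) * ((‖q‖)⁻¹) ^ n < ‖A‖ :=
      h2.eventually (gt_mem_nhds hApos)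
    obtain ⟨N₀, hN₀⟩ := Filter.eventually_atTop.mp h3
    refine ⟨max N₀ 1, le_max_right _ _, fun n hn => ?_⟩
    have h4 := hN₀ n (le_trans (le_max_left _ _) hn)
    have hqn : (0 : ℝ) < ‖q‖ ^ n := by positivity
    have h5 := mul_lt_mul_of_pos_right h4 hqn
    have h6 : ((‖q‖)⁻¹) ^ n * ‖q‖ ^ n = 1 := by
      rw [← mul_pow, inv_mul_cancel₀ (by positivity), one_pow]
    calc ‖C‖ + (n + 1)
        = ((‖C‖ + 1) * ((‖q‖)⁻¹) ^ n
            + (n : ℝ) * ((‖q‖)⁻¹) ^ n) * ‖q‖ ^ n := by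
          rw [add_mul, mul_assoc, mul_assoc, h6]; ring
      _ ≤ ‖A‖ * ‖q‖ ^ n := h5.le
  obtain ⟨N, hN1, hNbig⟩ := hN
  -- Step 4: the Taylor coefficients vanish from N on
  have hzero : ∀ n, N ≤ n → a n = 0 := by
    by_contra hcon
    push_neg at hcon
    obtain ⟨m, hm, hm0⟩ := hcon
    have hmono : ∀ k : ℕ, ‖a m‖ ≤ ‖a (m + k)‖ := by
      intro k
      induction k with
      | zero => simp
      | succ k ih =>
        have hmk : N ≤ m + k := le_trans hm (Nat.le_add_right _ _)
        have hne : m + k ≠ 0 := by omega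
        have hstep := hrec (m + k) hne
        have hbig := hNbig (m + k) hmk
        have h7 : ‖A * q ^ (m + k)‖
            ≤ ‖A * q ^ (m + k) + C‖ + ‖C‖ := by
          have h := norm_add_le (A * q ^ (m + k) + C) (-C)
          rw [add_neg_cancel_right, norm_neg] at h
          exact h
        have h8 : ‖A * q ^ (m + k)‖
            = ‖A‖ * ‖q‖ ^ (m + k) := by
          rw [norm_mul, norm_pow]
        have hA1 : ((m + k : ℕ) : ℝ) + 1 ≤ ‖A * q ^ (m + k) + C‖ := by
          rw [h8] at h7
          push_cast
          push_cast at hbig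
          linarith
        have h9 : ‖((m + k : ℕ) : ℂ) + 1‖ = ((m + k : ℕ) : ℝ) + 1 := by
          rw [show (((m + k : ℕ) : ℂ) + 1) = (((m + k + 1 : ℕ)) : ℂ) by push_cast; ring,
            Complex.norm_natCast]
          push_cast; ring
        have hpos : (0 : ℝ) < ((m + k : ℕ) : ℝ) + 1 := by positivity
        have habs : ‖a (m + k)‖ ≤ ‖a (m + k + 1)‖ := by
          rw [hstep]
          conv_rhs => rw [norm_mul, norm_div, h9]
          have hone : 1 ≤ ‖A * q ^ (m + k) + C‖ / (((m + k : ℕ) : ℝ) + 1) :=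
            (one_le_div hpos).mpr hA1
          nlinarith [norm_nonneg (a (m + k))]
        exact le_trans ih habs
    rw [Metric.tendsto_atTop] at htend
    obtain ⟨M, hM⟩ := htend (‖a m‖) (by simpa [norm_pos_iff] using hm0)
    have h10 := hM (max M m) (le_max_left _ _)
    have h11 := hmono (max M m - m)
    rw [Nat.add_sub_cancel' (le_max_right M m)] at h11
    simp only [dist_zero_right] at h10
    exact absurd h10 (not_lt.mpr h11)
  -- Step 5: f equals its truncated Taylor polynomial
  refine ⟨∑ i ∈ Finset.range N, Polynomial.C (a i) * Polynomial.X ^ i, fun z => ?_⟩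
  have hsz := Complex.hasSum_taylorSeries_of_entire hf 0 z
  have hsz' : HasSum (fun n : ℕ => a n * z ^ n) (f z) := by
    have hh : (fun n : ℕ => a n * z ^ n)
        = fun n : ℕ => (n.factorial : ℂ)⁻¹ • (z - 0) ^ n • iteratedDeriv n f 0 := by
      funext n
      simp only [ha, smul_eq_mul, sub_zero]
      ring
    rw [hh]; exact hsz
  have hfin : HasSum (fun n : ℕ => a n * z ^ n) (∑ i ∈ Finset.range N, a i * z ^ i) := by
    apply hasSum_sum_of_ne_finset_zero
    intro b hb
    rw [hzero b (by simpa using hb)]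
    ring
  rw [hsz'.unique hfin]
  simp [Polynomial.eval_finset_sum]
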